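/- (Dieudonné's lemma.) Fix z, w in the unit disk 𝔻 with z ≠ 0 and |w| ≤ |z|. Then the set of values ω'(z), as ω ranges over all analytic functions ω : 𝔻 → 𝔻 with ω(0) = 0 and ω(z) = w, is exactly the closed disk {v ∈ ℂ : |v − w/z| ≤ (|z|² − |w|²)/(|z|(1 − |z|²))}. -/

import Mathlib

open Metric Complex ComplexConjugate

noncomputable def Complex.abs : AbsoluteValue ℂ ℝ :=
  IsAbsoluteValue.toAbsoluteValue (norm : ℂ → ℝ)

lemma Complex.norm_eq_abs (z : ℂ) : ‖z‖ = Complex.abs z := rfl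

lemma Complex.abs_conj (z : ℂ) : Complex.abs (conj z) = Complex.abs z := Complex.norm_conj z

lemma Complex.abs_ofReal (r : ℝ) : Complex.abs (r : ℂ) = |r| := Complex.norm_real r

lemma Complex.sq_abs (z : ℂ) : Complex.abs z ^ 2 = normSq z := Complex.sq_norm z

lemma Complex.abs_deriv_le_one_of_mapsTo_ball {f : ℂ → ℂ} {c : ℂ} {R : ℝ}
    (hd : DifferentiableOn ℂ f (ball c R)) (h_maps : Set.MapsTo f (ball c R) (ball c R))
    (hc : f c = c) (h₀ : 0 < R) : Complex.abs (deriv f c) ≤ 1 :=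
  Complex.norm_deriv_le_one_of_mapsTo_ball hd
    (fun x hx => by rw [hc]; exact ball_subset_closedBall (h_maps hx)) h₀

lemma Complex.abs_le_abs_of_mapsTo_ball_self {f : ℂ → ℂ} {z : ℂ} {R : ℝ}
    (hd : DifferentiableOn ℂ f (ball 0 R)) (h_maps : Set.MapsTo f (ball 0 R) (ball 0 R))
    (h₀ : f 0 = 0) (hz : Complex.abs z < R) : Complex.abs (f z) ≤ Complex.abs z :=
  Complex.norm_le_norm_of_mapsTo_ball hd
    (fun x hx => ball_subset_closedBall (h_maps hx)) h₀ hz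

noncomputable def mob (a ζ : ℂ) : ℂ := (ζ + a) / (1 + conj a * ζ)

lemma normSq_key (a u : ℂ) :
    normSq (1 + conj a * u) - normSq (u + a) = (1 - normSq a) * (1 - normSq u) := by
  simp [normSq_apply, add_re, add_im, mul_re, mul_im, conj_re, conj_im]
  ring

lemma denom_ne {a u : ℂ} (h : Complex.abs a * Complex.abs u < 1) :
    1 + conj a * u ≠ 0 := by
  intro h0
  have : conj a * u = -1 := by linear_combination h0
  have h1 : Complex.abs (conj a * u) = 1 := by rw [this]; simp
  rw [map_mul, Complex.abs_conj] at h1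
  linarith

lemma abs_mob_lt {a u : ℂ} (ha : Complex.abs a < 1) (hu : Complex.abs u < 1) :
    Complex.abs (mob a u) < 1 := by
  have hau : Complex.abs a * Complex.abs u < 1 := by
    nlinarith [Complex.abs.nonneg a, Complex.abs.nonneg u]
  have hden := denom_ne hau
  have hdpos : 0 < Complex.abs (1 + conj a * u) := by
    simpa using (Complex.abs.pos hden)
  rw [mob, map_div₀, div_lt_one hdpos]
  have key := normSq_key a u
  have h1 : normSq a < 1 := by rw [← Complex.sq_abs]; nlinarith [Complex.abs.nonneg a]
  have h2 : normSq u < 1 := by rw [← Complex.sq_abs]; nlinarith [Complex.abs.nonneg u]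
  have : Complex.abs (u + a) ^ 2 < Complex.abs (1 + conj a * u) ^ 2 := by
    rw [Complex.sq_abs, Complex.sq_abs]; nlinarith
  exact lt_of_pow_lt_pow_left₀ 2 (Complex.abs.nonneg _) this

lemma abs_mob_le {a u : ℂ} (ha : Complex.abs a < 1) (hu : Complex.abs u ≤ 1) :
    Complex.abs (mob a u) ≤ 1 := by
  have hau : Complex.abs a * Complex.abs u < 1 := by
    nlinarith [Complex.abs.nonneg a, Complex.abs.nonneg u]
  have hden := denom_ne hau
  have hdpos : 0 < Complex.abs (1 + conj a * u) := by
    simpa using (Complex.abs.pos hden)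
  rw [mob, map_div₀, div_le_one hdpos]
  have key := normSq_key a u
  have h1 : normSq a < 1 := by rw [← Complex.sq_abs]; nlinarith [Complex.abs.nonneg a]
  have h2 : normSq u ≤ 1 := by rw [← Complex.sq_abs]; nlinarith [Complex.abs.nonneg u]
  have : Complex.abs (u + a) ^ 2 ≤ Complex.abs (1 + conj a * u) ^ 2 := by
    rw [Complex.sq_abs, Complex.sq_abs]; nlinarith
  exact le_of_pow_le_pow_left₀ two_ne_zero (Complex.abs.nonneg _) this

lemma mob_zero (a : ℂ) : mob a 0 = a := by simp [mob]

lemma hasDerivAt_mob (a : ℂ) {u : ℂ} (h : 1 + conj a * u ≠ 0) :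
    HasDerivAt (mob a) ((1 - conj a * a) / (1 + conj a * u) ^ 2) u := by
  have h1 : HasDerivAt (fun ζ : ℂ => ζ + a) 1 u := (hasDerivAt_id u).add_const a
  have h2 : HasDerivAt (fun ζ : ℂ => 1 + conj a * ζ) (conj a) u := by
    simpa using ((hasDerivAt_id u).const_mul (conj a)).const_add 1
  have := h1.div h2 h
  rw [show mob a = (fun ζ : ℂ => ζ + a) / fun ζ => 1 + conj a * ζ from rfl]
  refine this.congr_deriv ?_
  ring

lemma one_sub_conj_mul (a : ℂ) : (1 : ℂ) - conj a * a = ((1 - normSq a : ℝ) : ℂ) := by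
  push_cast
  rw [mul_comm, Complex.mul_conj]

lemma abs_one_sub_conj_mul {a : ℂ} (h : Complex.abs a ≤ 1) :
    Complex.abs (1 - conj a * a) = 1 - Complex.abs a ^ 2 := by
  rw [one_sub_conj_mul, Complex.abs_ofReal, ← Complex.sq_abs, _root_.abs_of_nonneg]
  nlinarith [Complex.abs.nonneg a]

lemma one_sub_conj_mul_ne {a : ℂ} (h : Complex.abs a < 1) : (1 : ℂ) - conj a * a ≠ 0 := by
  intro h0
  have := abs_one_sub_conj_mul h.le
  rw [h0] at this
  simp at this
  nlinarith [Complex.abs.nonneg a]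

lemma schwarzPick {φ : ℂ → ℂ} (hd : DifferentiableOn ℂ φ (ball (0:ℂ) 1))
    (hm : ∀ ζ ∈ ball (0:ℂ) 1, φ ζ ∈ ball (0:ℂ) 1) {z : ℂ} (hz : z ∈ ball (0:ℂ) 1) :
    Complex.abs (deriv φ z) ≤ (1 - Complex.abs (φ z) ^ 2) / (1 - Complex.abs z ^ 2) := by
  rw [mem_ball_zero_iff, Complex.norm_eq_abs] at hz
  set a := φ z with ha_def
  have ha : Complex.abs a < 1 := by
    have := hm z (mem_ball_zero_iff.2 hz)
    rwa [mem_ball_zero_iff] at this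
  -- the composed map
  set h : ℂ → ℂ := fun ζ => mob (-a) (φ (mob z ζ)) with hh_def
  have hmobz : ∀ ζ ∈ ball (0:ℂ) 1, mob z ζ ∈ ball (0:ℂ) 1 := by
    intro ζ hζ
    rw [mem_ball_zero_iff] at hζ ⊢
    exact abs_mob_lt hz hζ
  have hZ : mob z 0 = z := mob_zero z
  -- differentiability and derivative of h at 0 via chain rule
  have hden1 : (1:ℂ) + conj z * 0 ≠ 0 := by simpa using one_ne_zero
  have H1 : HasDerivAt (mob z) ((1 - conj z * z) / (1 + conj z * 0) ^ 2) 0 :=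
    hasDerivAt_mob z hden1
  have hφz : DifferentiableAt ℂ φ z :=
    (hd.differentiableAt (isOpen_ball.mem_nhds (mem_ball_zero_iff.2 hz)))
  have H2 : HasDerivAt φ (deriv φ z) z := hφz.hasDerivAt
  have hdena : (1:ℂ) + conj (-a) * a ≠ 0 := by
    have : (1:ℂ) + conj (-a) * a = 1 - conj a * a := by push_cast [map_neg]; ring
    rw [this]; exact one_sub_conj_mul_ne ha
  have H3 : HasDerivAt (mob (-a)) ((1 - conj (-a) * (-a)) / (1 + conj (-a) * a) ^ 2) a :=
    hasDerivAt_mob (-a) hdena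
  have H2'' : HasDerivAt φ (deriv φ z) (mob z 0) := by rw [hZ]; exact H2
  have Hin : HasDerivAt (fun ζ => φ (mob z ζ))
      (deriv φ z * ((1 - conj z * z) / (1 + conj z * 0) ^ 2)) 0 := H2''.comp 0 H1
  have haz : φ (mob z 0) = a := by rw [hZ]
  have H3' : HasDerivAt (mob (-a))
      ((1 - conj (-a) * (-a)) / (1 + conj (-a) * a) ^ 2) (φ (mob z 0)) := by
    rw [haz]; exact H3
  have Hh : HasDerivAt h
      (((1 - conj (-a) * (-a)) / (1 + conj (-a) * a) ^ 2) *
        (deriv φ z * ((1 - conj z * z) / (1 + conj z * 0) ^ 2))) 0 := by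
          have := H3'.comp 0 Hin; exact this
  -- h maps the disk to itself and fixes 0
  have hmap : ∀ ζ ∈ ball (0:ℂ) 1, h ζ ∈ ball (0:ℂ) 1 := by
    intro ζ hζ
    have h1 := hmobz ζ hζ
    have h2 := hm _ h1
    rw [mem_ball_zero_iff] at h2 ⊢
    have hna : Complex.abs (-a) < 1 := by simpa using ha
    exact abs_mob_lt hna h2
  have hh0 : h 0 = 0 := by
    simp only [hh_def, hZ, ← ha_def, mob]
    simp [← ha_def]
  have hdh : DifferentiableOn ℂ h (ball (0:ℂ) 1) := by
    intro ζ hζ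
    have hζ' : Complex.abs ζ < 1 := by
      rw [← Complex.norm_eq_abs]; exact mem_ball_zero_iff.1 hζ
    have hden1' : (1:ℂ) + conj z * ζ ≠ 0 :=
      denom_ne (by nlinarith [Complex.abs.nonneg z, Complex.abs.nonneg ζ])
    have D1 : DifferentiableAt ℂ (mob z) ζ := (hasDerivAt_mob z hden1').differentiableAt
    have D2 : DifferentiableAt ℂ φ (mob z ζ) :=
      hd.differentiableAt (isOpen_ball.mem_nhds (hmobz ζ hζ))
    have hv : Complex.abs (φ (mob z ζ)) < 1 := by
      rw [← Complex.norm_eq_abs]; exact mem_ball_zero_iff.1 (hm _ (hmobz ζ hζ))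
    have hden2' : (1:ℂ) + conj (-a) * (φ (mob z ζ)) ≠ 0 := by
      refine denom_ne ?_
      have hna : Complex.abs (-a) = Complex.abs a := by simp
      rw [hna]
      nlinarith [Complex.abs.nonneg a, Complex.abs.nonneg (φ (mob z ζ))]
    have D3 : DifferentiableAt ℂ (mob (-a)) (φ (mob z ζ)) :=
      (hasDerivAt_mob (-a) hden2').differentiableAt
    exact ((D3.comp ζ (D2.comp ζ D1))).differentiableWithinAt
  -- Schwarz lemma
  have hs := Complex.abs_deriv_le_one_of_mapsTo_ball hdh
      (fun ζ hζ => by simpa [hh0] using hmap ζ hζ) hh0 one_pos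
  rw [Hh.deriv] at hs
  -- unravel the absolute values
  have e1 : (1:ℂ) + conj (-a) * a = 1 - conj a * a := by push_cast [map_neg]; ring
  have e2 : (1:ℂ) - conj (-a) * (-a) = 1 - conj a * a := by push_cast [map_neg]; ring
  have e3 : (1:ℂ) + conj z * 0 = 1 := by ring
  rw [e1, e2, e3] at hs
  have hA : Complex.abs (1 - conj a * a) = 1 - Complex.abs a ^ 2 := abs_one_sub_conj_mul ha.le
  have hB : Complex.abs (1 - conj z * z) = 1 - Complex.abs z ^ 2 := abs_one_sub_conj_mul hz.le
  have hApos : (0:ℝ) < 1 - Complex.abs a ^ 2 := by nlinarith [Complex.abs.nonneg a]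
  have hBpos : (0:ℝ) < 1 - Complex.abs z ^ 2 := by nlinarith [Complex.abs.nonneg z]
  rw [map_mul, map_mul, map_div₀, map_div₀, hA, hB] at hs
  rw [map_pow, hA, map_pow] at hs
  simp only [map_one, one_pow, div_one] at hs
  have e4 : (1 - Complex.abs a ^ 2) / (1 - Complex.abs a ^ 2) ^ 2
      = (1 - Complex.abs a ^ 2)⁻¹ := by
    field_simp
  rw [e4, inv_mul_le_iff₀ hApos, mul_one] at hs
  rw [le_div_iff₀ hBpos]
  exact hs

lemma schwarzPickClosed {φ : ℂ → ℂ} (hd : DifferentiableOn ℂ φ (ball (0:ℂ) 1))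
    (hm : ∀ ζ ∈ ball (0:ℂ) 1, Complex.abs (φ ζ) ≤ 1) {z : ℂ} (hz : z ∈ ball (0:ℂ) 1) :
    Complex.abs (deriv φ z) ≤ (1 - Complex.abs (φ z) ^ 2) / (1 - Complex.abs z ^ 2) := by
  by_cases hcase : ∀ ζ ∈ ball (0:ℂ) 1, Complex.abs (φ ζ) < 1
  · exact schwarzPick hd (fun ζ hζ => by
      rw [mem_ball_zero_iff, Complex.norm_eq_abs]; exact hcase ζ hζ) hz
  · push_neg at hcase
    obtain ⟨ζ0, hζ0, hge⟩ := hcase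
    have heq1 : Complex.abs (φ ζ0) = 1 := le_antisymm (hm ζ0 hζ0) hge
    have hmax : IsMaxOn (norm ∘ φ) (ball (0:ℂ) 1) ζ0 := by
      intro ζ hζ
      simp only [Function.comp, Complex.norm_eq_abs, Set.mem_setOf_eq]
      rw [heq1]
      exact hm ζ hζ
    have hconst : Set.EqOn φ (Function.const ℂ (φ ζ0)) (ball (0:ℂ) 1) :=
      Complex.eqOn_of_isPreconnected_of_isMaxOn_norm (convex_ball _ _).isPreconnected
        isOpen_ball hd hζ0 hmax
    have hev : φ =ᶠ[nhds z] Function.const ℂ (φ ζ0) :=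
      Filter.eventuallyEq_of_mem (isOpen_ball.mem_nhds hz) hconst
    have hderiv : deriv φ z = 0 := by
      rw [hev.deriv_eq]
      exact deriv_const z (φ ζ0)
    rw [hderiv]
    simp only [map_zero]
    apply div_nonneg
    · have := hm z hz
      nlinarith [Complex.abs.nonneg (φ z)]
    · rw [mem_ball_zero_iff, Complex.norm_eq_abs] at hz
      nlinarith [Complex.abs.nonneg z]

/-- Dieudonné's lemma: for fixed `z ≠ 0` in the unit disk and `|w| ≤ |z|`, the set of
values `ω'(z)`, over all analytic `ω : 𝔻 → 𝔻` with `ω(0) = 0` and `ω(z) = w`, is exactly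
the closed disk centered at `w/z` of radius `(|z|² - |w|²)/(|z|(1 - |z|²))`. -/
theorem dieudonne_lemma (z w : ℂ) (hz : z ∈ ball (0:ℂ) 1) (hz0 : z ≠ 0)
    (hw : ‖w‖ ≤ ‖z‖) :
    {v : ℂ | ∃ ω : ℂ → ℂ, DifferentiableOn ℂ ω (ball (0:ℂ) 1) ∧
        (∀ ζ ∈ ball (0:ℂ) 1, ω ζ ∈ ball (0:ℂ) 1) ∧ ω 0 = 0 ∧ ω z = w ∧ v = deriv ω z}
      = closedBall (w / z)
          ((‖z‖ ^ 2 - ‖w‖ ^ 2)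
            / (‖z‖ * (1 - ‖z‖ ^ 2))) := by
  simp only [Complex.norm_eq_abs] at hw ⊢
  have hz1 : Complex.abs z < 1 := by
    rw [← Complex.norm_eq_abs]; exact mem_ball_zero_iff.1 hz
  have hzpos : 0 < Complex.abs z := Complex.abs.pos hz0
  have hden : 0 < 1 - Complex.abs z ^ 2 := by nlinarith [Complex.abs.nonneg z]
  ext v
  simp only [Set.mem_setOf_eq, mem_closedBall, Complex.dist_eq, Complex.norm_eq_abs]
  constructor
  · rintro ⟨ω, hd, hm, h0, hzw, hv⟩
    set φ := dslope ω 0 with hφ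
    have hφd : DifferentiableOn ℂ φ (ball (0:ℂ) 1) :=
      (differentiableOn_dslope (ball_mem_nhds 0 one_pos)).mpr hd
    have hωabs : ∀ ζ ∈ ball (0:ℂ) 1, Complex.abs (ω ζ) ≤ Complex.abs ζ := by
      intro ζ hζ
      exact Complex.abs_le_abs_of_mapsTo_ball_self hd (fun x hx => hm x hx) h0
        (by rw [← Complex.norm_eq_abs]; exact mem_ball_zero_iff.1 hζ)
    have hφle : ∀ ζ ∈ ball (0:ℂ) 1, Complex.abs (φ ζ) ≤ 1 := by
      intro ζ hζ
      rcases eq_or_ne ζ 0 with h | h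
      · subst h
        rw [hφ, dslope_same]
        exact Complex.abs_deriv_le_one_of_mapsTo_ball hd (fun x hx => hm x hx) h0 one_pos
      · rw [hφ, dslope_of_ne ω h, slope_def_field, h0, sub_zero, sub_zero, map_div₀]
        rw [div_le_one (Complex.abs.pos h)]
        exact hωabs ζ hζ
    have hφzval : φ z = w / z := by
      rw [hφ, dslope_of_ne ω hz0, slope_def_field, h0, sub_zero, sub_zero, hzw]
    have hfac : Set.EqOn ω (fun ζ => ζ * φ ζ) (ball (0:ℂ) 1) := by
      intro ζ hζ
      rcases eq_or_ne ζ 0 with h | h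
      · subst h; simp [h0]
      · simp only [hφ, dslope_of_ne ω h, slope_def_field, h0, sub_zero]
        field_simp
    have hφz : DifferentiableAt ℂ φ z := hφd.differentiableAt (isOpen_ball.mem_nhds hz)
    have Hω : HasDerivAt (fun ζ => ζ * φ ζ) (1 * φ z + z * deriv φ z) z :=
      (hasDerivAt_id z).mul hφz.hasDerivAt
    have hder : deriv ω z = φ z + z * deriv φ z := by
      have hevq : ω =ᶠ[nhds z] fun ζ => ζ * φ ζ :=
        Filter.eventuallyEq_of_mem (isOpen_ball.mem_nhds hz) hfac
      rw [hevq.deriv_eq, Hω.deriv, one_mul]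
    have hsp := schwarzPickClosed hφd hφle hz
    have hvz : v - w / z = z * deriv φ z := by rw [hv, hder, hφzval]; ring
    rw [hvz, map_mul]
    have habsφz : Complex.abs (φ z) = Complex.abs w / Complex.abs z := by
      rw [hφzval, map_div₀]
    calc Complex.abs z * Complex.abs (deriv φ z)
        ≤ Complex.abs z * ((1 - Complex.abs (φ z) ^ 2) / (1 - Complex.abs z ^ 2)) :=
          mul_le_mul_of_nonneg_left hsp hzpos.le
      _ = (Complex.abs z ^ 2 - Complex.abs w ^ 2)
            / (Complex.abs z * (1 - Complex.abs z ^ 2)) := by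
          rw [habsφz]
          field_simp
  · intro hball
    rcases eq_or_lt_of_le hw with h1 | h1
    · -- |w| = |z| : radius is 0, the rotation works
      have hR : (Complex.abs z ^ 2 - Complex.abs w ^ 2)
          / (Complex.abs z * (1 - Complex.abs z ^ 2)) = 0 := by
        rw [← h1]; simp
      have hveq : v = w / z := by
        rw [hR] at hball
        have := Complex.abs.nonneg (v - w / z)
        have h0' : Complex.abs (v - w / z) = 0 := le_antisymm hball this
        have := Complex.abs.eq_zero.1 h0'
        exact sub_eq_zero.1 this
      refine ⟨fun ζ => w / z * ζ, ?_, ?_, ?_, ?_, ?_⟩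
      · exact (differentiable_id.const_mul _).differentiableOn
      · intro ζ hζ
        rw [mem_ball_zero_iff] at hζ ⊢
        rw [norm_mul, norm_div, Complex.norm_eq_abs, Complex.norm_eq_abs, h1,
          div_self hzpos.ne', one_mul]
        exact hζ
      · simp
      · exact div_mul_cancel₀ w hz0
      · have : HasDerivAt (fun ζ : ℂ => w / z * ζ) (w / z * 1) z :=
          (hasDerivAt_id z).const_mul (w / z)
        rw [this.deriv, mul_one, hveq]
    · -- |w| < |z|
      set a : ℂ := w / z with ha_def
      have ha : Complex.abs a < 1 := by
        rw [ha_def, map_div₀, div_lt_one hzpos]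
        exact h1
      have hApos : (0:ℝ) < 1 - Complex.abs a ^ 2 := by nlinarith [Complex.abs.nonneg a]
      set c : ℂ := (v - a) / z with hc_def
      have hc : Complex.abs c ≤ (1 - Complex.abs a ^ 2) / (1 - Complex.abs z ^ 2) := by
        rw [hc_def, map_div₀]
        have step : Complex.abs (v - a) / Complex.abs z
            ≤ ((Complex.abs z ^ 2 - Complex.abs w ^ 2)
                / (Complex.abs z * (1 - Complex.abs z ^ 2))) / Complex.abs z := by
          gcongr
        refine step.trans (le_of_eq ?_)
        have haa : Complex.abs a = Complex.abs w / Complex.abs z := by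
          rw [ha_def, map_div₀]
        rw [haa]
        field_simp
      set μ : ℂ := c * (1 - conj z * z) / (1 - conj a * a) with hμ_def
      have hzz_ne : (1:ℂ) - conj z * z ≠ 0 := one_sub_conj_mul_ne hz1
      have haa_ne : (1:ℂ) - conj a * a ≠ 0 := one_sub_conj_mul_ne ha
      have hμ : Complex.abs μ ≤ 1 := by
        rw [hμ_def, map_div₀, map_mul, abs_one_sub_conj_mul hz1.le,
          abs_one_sub_conj_mul ha.le, div_le_one hApos]
        calc Complex.abs c * (1 - Complex.abs z ^ 2)
            ≤ ((1 - Complex.abs a ^ 2) / (1 - Complex.abs z ^ 2)) * (1 - Complex.abs z ^ 2) := by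
              gcongr
          _ = 1 - Complex.abs a ^ 2 := by field_simp
      set inner : ℂ → ℂ := fun ζ => μ * mob (-z) ζ with hinner_def
      set φ : ℂ → ℂ := fun ζ => mob a (inner ζ) with hφ_def
      set ω : ℂ → ℂ := fun ζ => ζ * φ ζ with hω_def
      -- pointwise facts
      have hmz : Complex.abs (-z) < 1 := by simpa using hz1
      have key : ∀ ζ ∈ ball (0:ℂ) 1,
          ((1:ℂ) + conj (-z) * ζ ≠ 0) ∧ Complex.abs (inner ζ) < 1 ∧
            ((1:ℂ) + conj a * inner ζ ≠ 0) ∧ Complex.abs (φ ζ) < 1 := by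
        intro ζ hζ
        have hζ' : Complex.abs ζ < 1 := by
          rw [← Complex.norm_eq_abs]; exact mem_ball_zero_iff.1 hζ
        have hd1 : (1:ℂ) + conj (-z) * ζ ≠ 0 := by
          refine denom_ne ?_
          have : Complex.abs (-z) = Complex.abs z := by simp
          rw [this]
          nlinarith [Complex.abs.nonneg z, Complex.abs.nonneg ζ]
        have hmobu : Complex.abs (mob (-z) ζ) < 1 := abs_mob_lt hmz hζ'
        have hinn : Complex.abs (inner ζ) < 1 := by
          rw [hinner_def]
          simp only [map_mul]
          calc Complex.abs μ * Complex.abs (mob (-z) ζ)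
              ≤ 1 * Complex.abs (mob (-z) ζ) :=
                mul_le_mul_of_nonneg_right hμ (Complex.abs.nonneg _)
            _ = Complex.abs (mob (-z) ζ) := one_mul _
            _ < 1 := hmobu
        have hd2 : (1:ℂ) + conj a * inner ζ ≠ 0 :=
          denom_ne (by nlinarith [Complex.abs.nonneg a, Complex.abs.nonneg (inner ζ)])
        exact ⟨hd1, hinn, hd2, abs_mob_lt ha hinn⟩
      have hφdiff : ∀ ζ ∈ ball (0:ℂ) 1, DifferentiableAt ℂ φ ζ := by
        intro ζ hζ
        obtain ⟨hd1, hinn, hd2, -⟩ := key ζ hζ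
        have D1 : DifferentiableAt ℂ (mob (-z)) ζ := (hasDerivAt_mob (-z) hd1).differentiableAt
        have D2 : DifferentiableAt ℂ inner ζ := D1.const_mul μ
        have D3 : DifferentiableAt ℂ (mob a) (inner ζ) :=
          (hasDerivAt_mob a hd2).differentiableAt
        exact D3.comp ζ D2
      refine ⟨ω, ?_, ?_, ?_, ?_, ?_⟩
      · intro ζ hζ
        exact (differentiableAt_id.mul (hφdiff ζ hζ)).differentiableWithinAt
      · intro ζ hζ
        obtain ⟨-, -, -, hφlt⟩ := key ζ hζ
        have hζ' : Complex.abs ζ < 1 := by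
          rw [← Complex.norm_eq_abs]; exact mem_ball_zero_iff.1 hζ
        rw [mem_ball_zero_iff, Complex.norm_eq_abs, hω_def]
        simp only [map_mul]
        nlinarith [Complex.abs.nonneg ζ, Complex.abs.nonneg (φ ζ)]
      · simp [hω_def]
      · have hmzz : mob (-z) z = 0 := by
          rw [mob]
          simp
        have : φ z = a := by
          rw [hφ_def]
          simp only [hinner_def, hmzz, mul_zero, mob_zero]
        rw [hω_def]
        simp only [this, ha_def]
        exact mul_div_cancel₀ w hz0
      · -- derivative computation
        have hd1z : (1:ℂ) + conj (-z) * z ≠ 0 := by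
          have : (1:ℂ) + conj (-z) * z = 1 - conj z * z := by
            rw [map_neg]; ring
          rw [this]; exact hzz_ne
        have H1 : HasDerivAt (mob (-z))
            ((1 - conj (-z) * (-z)) / (1 + conj (-z) * z) ^ 2) z := hasDerivAt_mob (-z) hd1z
        have H2 : HasDerivAt inner (μ * ((1 - conj (-z) * (-z)) / (1 + conj (-z) * z) ^ 2)) z :=
          H1.const_mul μ
        have hmzz : mob (-z) z = 0 := by rw [mob]; simp
        have hinnz : inner z = 0 := by rw [hinner_def]; simp [hmzz]
        have H3 : HasDerivAt (mob a) ((1 - conj a * a) / (1 + conj a * inner z) ^ 2) (inner z) := by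
          apply hasDerivAt_mob
          rw [hinnz]; simp
        have Hφ : HasDerivAt φ
            (((1 - conj a * a) / (1 + conj a * inner z) ^ 2) *
              (μ * ((1 - conj (-z) * (-z)) / (1 + conj (-z) * z) ^ 2))) z := H3.comp z H2
        have hD : ((1 - conj a * a) / (1 + conj a * inner z) ^ 2) *
            (μ * ((1 - conj (-z) * (-z)) / (1 + conj (-z) * z) ^ 2)) = c := by
          rw [hinnz, hμ_def]
          simp only [map_neg, mul_neg, neg_mul, neg_neg, mul_zero, add_zero]
          have e1 : (1:ℂ) + -((starRingEnd ℂ) z * z) = 1 - conj z * z := by ring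
          rw [e1]
          field_simp
        rw [hD] at Hφ
        have Hω : HasDerivAt ω (1 * φ z + z * c) z := (hasDerivAt_id z).mul Hφ
        rw [Hω.deriv]
        have hφza : φ z = a := by
          rw [hφ_def]
          simp only [hinnz, mob_zero]
        rw [hφza, one_mul, hc_def, mul_div_cancel₀ _ hz0]
        ring
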